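/- Let X be a Hilbert space, A, B nonempty closed convex subsets with displacement vector v, and suppose there exists e ∈ A ∩ (B - v) and x* ∈ S_{X*} with inf x*(B - v) = x*(e) = sup x*(A) and x* strongly exposing A at e. Then E = {a ∈ A : dist(a,B) = dist(A,B)} = {e}, i.e., E is a singleton. -/

import Mathlib

open Pointwise

/-- `p` is the metric projection of `x` onto the set `C`. -/
def IsProjPt {X : Type*} [NormedAddCommGroup X] (C : Set X) (x p : X) : Prop :=
  p ∈ C ∧ ∀ y ∈ C, dist x p ≤ dist x y

private lemma le_infDist_aux {X : Type*} [MetricSpace X] {s : Set X} (hs : s.Nonempty)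
    {x : X} {b : ℝ} (H : ∀ y ∈ s, b ≤ dist x y) : b ≤ Metric.infDist x s := by
  by_contra h
  obtain ⟨y, hy, hd⟩ := (Metric.infDist_lt_iff hs).1 (not_le.1 h)
  exact hd.not_ge (H y hy)

/-- Minimizing sequences for the norm over a convex set converge to the minimizer. -/
private lemma min_seq_tendsto {X : Type*} [NormedAddCommGroup X] [InnerProductSpace ℝ X]
    {C : Set X} (hC : Convex ℝ C) {v : X} (hvC : v ∈ C)
    (hmin : ∀ y ∈ C, ‖v‖ ≤ ‖y‖) {c : ℕ → X} (hc : ∀ n, c n ∈ C)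
    (hn : Filter.Tendsto (fun n => ‖c n‖) Filter.atTop (nhds ‖v‖)) :
    Filter.Tendsto c Filter.atTop (nhds v) := by
  have key : ∀ n, ‖c n - v‖ ^ 2 ≤ 2 * ‖c n‖ ^ 2 - 2 * ‖v‖ ^ 2 := by
    intro n
    have hmid : v ∈ C → c n ∈ C → (1/2 : ℝ) • v + (1/2 : ℝ) • c n ∈ C := by
      intro h1 h2
      exact hC h1 h2 (by norm_num) (by norm_num) (by norm_num)
    have hm := hmin _ (hmid hvC (hc n))
    have hmsq : ‖v‖ ^ 2 ≤ ‖(1/2 : ℝ) • v + (1/2 : ℝ) • c n‖ ^ 2 :=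
      pow_le_pow_left₀ (norm_nonneg _) hm 2
    have hrw : (1/2 : ℝ) • v + (1/2 : ℝ) • c n = (1/2 : ℝ) • (c n + v) := by
      rw [smul_add]; abel
    rw [hrw, norm_smul] at hmsq
    have h1 : ‖c n + v‖ ^ 2 = ‖c n‖ ^ 2 + 2 * inner ℝ (c n) v + ‖v‖ ^ 2 := norm_add_sq_real _ _
    have h2 : ‖c n - v‖ ^ 2 = ‖c n‖ ^ 2 - 2 * inner ℝ (c n) v + ‖v‖ ^ 2 := norm_sub_sq_real _ _
    rw [Real.norm_eq_abs, abs_of_pos (by norm_num : (0:ℝ) < 1/2)] at hmsq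
    nlinarith [hmsq, h1, h2]
  have hg : Filter.Tendsto (fun n => 2 * ‖c n‖ ^ 2 - 2 * ‖v‖ ^ 2) Filter.atTop (nhds 0) := by
    have : Filter.Tendsto (fun n => 2 * ‖c n‖ ^ 2 - 2 * ‖v‖ ^ 2) Filter.atTop
        (nhds (2 * ‖v‖ ^ 2 - 2 * ‖v‖ ^ 2)) := by
      exact (((hn.pow 2).const_mul 2).sub tendsto_const_nhds)
    simpa using this
  have hsq : Filter.Tendsto (fun n => ‖c n - v‖ ^ 2) Filter.atTop (nhds 0) :=
    squeeze_zero (fun n => sq_nonneg _) key hg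
  have hnorm : Filter.Tendsto (fun n => ‖c n - v‖) Filter.atTop (nhds 0) := by
    have h := (Real.continuous_sqrt.tendsto 0).comp hsq
    simp only [Function.comp_def, Real.sqrt_sq (norm_nonneg _), Real.sqrt_zero] at h
    exact h
  exact tendsto_iff_norm_sub_tendsto_zero.2 hnorm

theorem stmt10 {X : Type*} [NormedAddCommGroup X] [InnerProductSpace ℝ X] [CompleteSpace X]
    (A B : Set X) (hAne : A.Nonempty) (hBne : B.Nonempty)
    (hAc : IsClosed A) (hBc : IsClosed B) (hAconv : Convex ℝ A) (hBconv : Convex ℝ B)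
    (v : X) (hv : IsProjPt (closure (B - A)) 0 v)
    (E : Set X)
    (hE : E = {a ∈ A | Metric.infDist a B = ⨅ a' : A, Metric.infDist (a' : X) B})
    (e : X) (he : e ∈ A ∩ ((· - v) '' B))
    (f : X →L[ℝ] ℝ) (hf : ‖f‖ = 1)
    (hinf : ∀ b ∈ (· - v) '' B, f e ≤ f b) (hsup : ∀ a ∈ A, f a ≤ f e)
    (hexp : ∀ x : ℕ → X, (∀ n, x n ∈ A) →
      Filter.Tendsto (fun n => f (x n)) Filter.atTop (nhds (f e)) →
      Filter.Tendsto x Filter.atTop (nhds e)) :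
    E = {e} := by
  obtain ⟨heA, b₀, hb₀B, hb₀e⟩ := he
  -- e + v ∈ B
  have hevB : e + v ∈ B := by
    have : b₀ = e + v := by simp only at hb₀e; linear_combination (norm := abel) hb₀e
    rwa [← this]
  -- v minimizes the norm on closure (B - A)
  have hvmin : ∀ y ∈ closure (B - A), ‖v‖ ≤ ‖y‖ := by
    intro y hy
    have := hv.2 y hy
    simpa [dist_zero_left] using this
  -- lower bound: ∀ a ∈ A, ‖v‖ ≤ infDist a B
  have hlow : ∀ a ∈ A, ‖v‖ ≤ Metric.infDist a B := by
    intro a ha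
    refine le_infDist_aux hBne fun b hb => ?_
    have hmem : b - a ∈ closure (B - A) := subset_closure (Set.sub_mem_sub hb ha)
    calc ‖v‖ ≤ ‖b - a‖ := hvmin _ hmem
    _ = dist a b := by rw [dist_eq_norm, norm_sub_rev]
  -- upper bound at e
  have hupe : Metric.infDist e B ≤ ‖v‖ := by
    have := Metric.infDist_le_dist_of_mem (x := e) hevB
    simpa [dist_eq_norm] using this
  have heq : Metric.infDist e B = ‖v‖ := le_antisymm hupe (hlow e heA)
  -- the infimum over A equals ‖v‖
  haveI : Nonempty A := hAne.to_subtype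
  have hiInf : (⨅ a' : A, Metric.infDist (a' : X) B) = ‖v‖ := by
    apply le_antisymm
    · have : (⨅ a' : A, Metric.infDist (a' : X) B) ≤ Metric.infDist e B := by
        apply ciInf_le ⟨‖v‖, ?_⟩ (⟨e, heA⟩ : A)
        rintro r ⟨a, rfl⟩
        exact hlow a a.2
      rw [heq] at this; exact this
    · exact le_ciInf fun a => hlow a a.2
  ext a
  simp only [hE, Set.mem_setOf_eq, Set.mem_singleton_iff, hiInf]
  constructor
  · rintro ⟨haA, hda⟩
    -- construct a minimizing sequence in B
    have hseq : ∀ n : ℕ, ∃ b ∈ B, dist a b < ‖v‖ + 1 / (n + 1) := by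
      intro n
      apply (Metric.infDist_lt_iff hBne).1
      rw [hda]
      have : (0 : ℝ) < 1 / (n + 1) := by positivity
      linarith
    choose b hbB hbd using hseq
    have hcmem : ∀ n, b n - a ∈ closure (B - A) :=
      fun n => subset_closure (Set.sub_mem_sub (hbB n) haA)
    have hnormten : Filter.Tendsto (fun n => ‖b n - a‖) Filter.atTop (nhds ‖v‖) := by
      have h1 : ∀ n : ℕ, ‖v‖ ≤ ‖b n - a‖ := fun n => hvmin _ (hcmem n)
      have h2 : ∀ n : ℕ, ‖b n - a‖ ≤ ‖v‖ + 1 / (n + 1) := by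
        intro n
        have := hbd n
        rw [dist_eq_norm, norm_sub_rev] at this
        linarith
      have hub : Filter.Tendsto (fun n : ℕ => ‖v‖ + 1 / (n + 1 : ℝ)) Filter.atTop (nhds (‖v‖ + 0)) :=
        tendsto_const_nhds.add tendsto_one_div_add_atTop_nhds_zero_nat
      rw [add_zero] at hub
      exact tendsto_of_tendsto_of_tendsto_of_le_of_le tendsto_const_nhds hub h1 h2
    have hcten : Filter.Tendsto (fun n => b n - a) Filter.atTop (nhds v) :=
      min_seq_tendsto ((hBconv.sub hAconv).closure) hv.1 hvmin hcmem hnormten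
    -- hence b n → a + v, so a + v ∈ B
    have hbten : Filter.Tendsto b Filter.atTop (nhds (a + v)) := by
      have := hcten.add (tendsto_const_nhds (x := a))
      simpa [sub_add_cancel, add_comm] using this
    have havB : a + v ∈ B := hBc.mem_of_tendsto hbten (Filter.Eventually.of_forall hbB)
    have haimg : a ∈ (· - v) '' B := ⟨a + v, havB, by simp⟩
    have hfa : f a = f e := le_antisymm (hsup a haA) (hinf a haimg)
    -- strong exposedness with the constant sequence
    have h := hexp (fun _ => a) (fun _ => haA) (by simp only [hfa]; exact tendsto_const_nhds)
    exact tendsto_nhds_unique tendsto_const_nhds h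
  · rintro rfl
    exact ⟨heA, heq⟩
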